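/- Let G be a finite abelian group with a non-degenerate alternating bilinear pairing ⟨·,·⟩ : G × G → ℚ/ℤ. Then there exists a subgroup H ⊆ G that is isotropic (⟨x,y⟩ = 0 for all x, y ∈ H) and satisfies (#H)² = #G. -/

import Mathlib

local notation "Q" => ℚ ⧸ AddSubgroup.zmultiples (1 : ℚ)

lemma qz_int_smul_eq_zero {k : ℤ} {n : ℕ} (hn : 0 < n) :
    k • (((n : ℚ)⁻¹ : ℚ) : Q) = 0 ↔ (n : ℤ) ∣ k := by
  rw [← QuotientAddGroup.mk_zsmul, QuotientAddGroup.eq_zero_iff,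
    AddSubgroup.mem_zmultiples_iff]
  constructor
  · rintro ⟨m, hm⟩
    refine ⟨m, ?_⟩
    have hn' : (n : ℚ) ≠ 0 := by positivity
    have := hm
    simp only [zsmul_eq_mul, mul_one] at this
    field_simp at this
    rw [mul_comm] at this; exact_mod_cast this.symm
  · rintro ⟨m, rfl⟩
    refine ⟨m, ?_⟩
    have hn' : (n : ℚ) ≠ 0 := by positivity
    simp only [zsmul_eq_mul]
    push_cast
    field_simp
lemma qz_ker_nsmul {n : ℕ} (hn : 0 < n) (t : Q) (ht : n • t = 0) :
    ∃ k : ℤ, t = k • (((n : ℚ)⁻¹ : ℚ) : Q) := by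
  induction t using QuotientAddGroup.induction_on with
  | H r =>
    rw [← QuotientAddGroup.mk_nsmul, QuotientAddGroup.eq_zero_iff,
      AddSubgroup.mem_zmultiples_iff] at ht
    obtain ⟨m, hm⟩ := ht
    refine ⟨m, ?_⟩
    rw [← QuotientAddGroup.mk_zsmul]
    congr 1
    have hn' : (n : ℚ) ≠ 0 := by positivity
    have := hm
    simp only [zsmul_eq_mul, smul_eq_mul, mul_one, nsmul_eq_mul] at this ⊢
    field_simp
    linarith [this]

lemma card_sup_of_disjoint' {G : Type*} [AddCommGroup G] {A B : AddSubgroup G}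
    (h : A ⊓ B = ⊥) : Nat.card ↥(A ⊔ B) = Nat.card A * Nat.card B := by
  have hf : Function.Bijective (fun p : A × B => (⟨(p.1 : G) + p.2,
      AddSubgroup.mem_sup.2 ⟨p.1, p.1.2, p.2, p.2.2, rfl⟩⟩ : ↥(A ⊔ B))) := by
    constructor
    · rintro ⟨⟨a, ha⟩, ⟨b, hb⟩⟩ ⟨⟨a', ha'⟩, ⟨b', hb'⟩⟩ hab
      simp only [Subtype.mk.injEq] at hab
      have hmem : a - a' ∈ A ⊓ B := by
        constructor
        · exact A.sub_mem ha ha'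
        · have : a - a' = b' - b := by abel_nf; linear_combination (norm := abel) hab
          rw [this]; exact B.sub_mem hb' hb
      rw [h, AddSubgroup.mem_bot, sub_eq_zero] at hmem
      subst hmem
      have : b = b' := add_left_cancel hab
      simp [this]
    · rintro ⟨g, hg⟩
      obtain ⟨a, ha, b, hb, rfl⟩ := AddSubgroup.mem_sup.1 hg
      exact ⟨(⟨a, ha⟩, ⟨b, hb⟩), rfl⟩
  calc Nat.card ↥(A ⊔ B) = Nat.card (A × B) := (Nat.card_congr (Equiv.ofBijective _ hf)).symm
    _ = Nat.card A * Nat.card B := Nat.card_prod _ _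

universe u

lemma aux_lagrangian : ∀ (n : ℕ) (G : Type u) [AddCommGroup G] [Finite G]
    (B : G → G → Q),
    (∀ x y z : G, B (x + y) z = B x z + B y z) →
    (∀ x y z : G, B x (y + z) = B x y + B x z) →
    (∀ x : G, B x x = 0) →
    (∀ x : G, (∀ y : G, B x y = 0) → x = 0) →
    Nat.card G ≤ n →
    ∃ H : AddSubgroup G, (∀ x ∈ H, ∀ y ∈ H, B x y = 0) ∧
      Nat.card H ^ 2 = Nat.card G := by
  intro n
  induction n with
  | zero =>
    intro G _ _ B _ _ _ _ hle
    exact absurd (Nat.card_pos (α := G)) (by omega)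
  | succ n ih =>
    intro G _ _ B hl hr halt hnd hle
    -- package B as a bilinear hom
    set Bh : G →+ G →+ Q := AddMonoidHom.mk'
        (fun x => AddMonoidHom.mk' (B x) (fun y z => hr x y z))
        (by intro a b; ext z; exact hl a b z) with hBh
    have hB : ∀ g h : G, Bh g h = B g h := fun _ _ => rfl
    have hBl : ∀ (k : ℤ) (g h : G), B (k • g) h = k • B g h := by
      intro k g h; rw [← hB, ← hB, map_zsmul Bh k g]; rfl
    have hBr : ∀ (k : ℤ) (g h : G), B g (k • h) = k • B g h := by
      intro k g h; rw [← hB, ← hB, map_zsmul (Bh g)]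
    have hB0l : ∀ h : G, B 0 h = 0 := by
      intro h; rw [← hB, map_zero]; rfl
    have hB0r : ∀ g : G, B g 0 = 0 := by
      intro g; rw [← hB, map_zero]
    have hsubr : ∀ g h h' : G, B g (h - h') = B g h - B g h' := by
      intro g h h'; rw [← hB, ← hB, ← hB, map_sub]
    have hskew : ∀ g h : G, B h g = - B g h := by
      intro g h
      have h0 := halt (g + h)
      rw [hl g h, hr, hr, halt g, halt h, zero_add, add_zero] at h0
      exact eq_neg_of_add_eq_zero_right h0
    by_cases hG : ∀ g : G, g = 0
    · refine ⟨⊥, ?_, ?_⟩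
      · intro a ha b hb
        rw [AddSubgroup.mem_bot] at ha hb; subst ha; subst hb
        exact halt 0
      · haveI : Subsingleton G := ⟨fun a b => by rw [hG a, hG b]⟩
        rw [AddSubgroup.card_bot, Nat.card_eq_one_iff_unique.2 ⟨inferInstance, ⟨0⟩⟩]; norm_num
    push_neg at hG
    obtain ⟨g0, hg0⟩ := hG
    have hEE : AddMonoid.ExponentExists G := AddMonoid.ExponentExists.of_finite
    set e := AddMonoid.exponent G with he
    have he0 : 0 < e := hEE.exponent_pos
    obtain ⟨x, hx⟩ := AddMonoid.exists_addOrderOf_eq_exponent hEE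
    rw [← he] at hx
    have hee : ∀ g : G, (e : ℤ) • g = 0 := by
      intro g
      rw [natCast_zsmul]
      exact AddMonoid.exponent_nsmul_eq_zero g
    have he1 : e ≠ 1 := by
      intro h1
      apply hg0
      have := hee g0
      rw [h1] at this
      simpa using this
    set q0 : Q := (((e:ℚ)⁻¹ : ℚ) : Q) with hq0
    have hq0e : ∀ k : ℤ, k • q0 = 0 ↔ (e:ℤ) ∣ k := fun k => qz_int_smul_eq_zero he0
    have hrep : ∀ g h : G, ∃ k : ℤ, B g h = k • q0 := by
      intro g h
      refine qz_ker_nsmul he0 _ ?_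
      rw [← natCast_zsmul, ← hBl, hee, hB0l]
    have hxk : ∀ k : ℤ, k • x = 0 ↔ (e:ℤ) ∣ k := by
      intro k
      rw [← hx]
      exact addOrderOf_dvd_iff_zsmul_eq_zero.symm
    -- find y with B x y = q0
    set φ : ℤ →+ Q := (zmultiplesHom Q) q0 with hφ
    have hφa : ∀ k : ℤ, φ k = k • q0 := fun k => rfl
    set K0 : AddSubgroup ℤ := AddSubgroup.comap φ (Bh x).range with hK0
    obtain ⟨a, haa⟩ := Int.subgroup_cyclic K0
    have haK : ∀ k : ℤ, k ∈ K0 ↔ a ∣ k := by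
      intro k
      rw [haa, ← AddSubgroup.zmultiples_eq_closure, Int.mem_zmultiples_iff]
    have heK : (e:ℤ) ∈ K0 := by
      rw [hK0, AddSubgroup.mem_comap, hφa, (hq0e _).2 dvd_rfl]
      exact AddSubgroup.zero_mem _
    have hae : a ∣ (e:ℤ) := (haK _).1 heK
    have heZ0 : (e:ℤ) ≠ 0 := by exact_mod_cast he0.ne'
    have hdiv : ∀ h : G, ((e:ℤ)/a) • B x h = 0 := by
      intro h
      obtain ⟨k, hk⟩ := hrep x h
      have hkK : k ∈ K0 := by
        rw [hK0, AddSubgroup.mem_comap, hφa]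
        exact ⟨h, by rw [hB]; exact hk⟩
      obtain ⟨m, hm⟩ := (haK k).1 hkK
      rw [hk, smul_smul, hm, ← mul_assoc, Int.ediv_mul_cancel hae]
      exact (hq0e _).2 ⟨m, rfl⟩
    have hxea : ((e:ℤ)/a) • x = 0 := by
      apply hnd
      intro h
      rw [hBl]
      exact hdiv h
    have hadvd1 : a ∣ 1 := by
      obtain ⟨t, ht⟩ := (hxk _).1 hxea
      have h1 : a * ((e:ℤ)/a) = (e:ℤ) := Int.mul_ediv_cancel' hae
      rw [ht] at h1
      exact ⟨t, mul_left_cancel₀ heZ0 (by linear_combination -h1)⟩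
    have h1K : (1:ℤ) ∈ K0 := (haK 1).2 hadvd1
    rw [hK0, AddSubgroup.mem_comap] at h1K
    obtain ⟨y, hy⟩ := h1K
    have hxy : B x y = q0 := by rw [← hB, hy, hφa, one_smul]
    have hyx : B y x = -q0 := by rw [hskew x y, hxy]
    have hyk : ∀ k : ℤ, k • y = 0 → (e:ℤ) ∣ k := by
      intro k hk
      have h2 : B x (k • y) = 0 := by rw [hk, hB0r]
      rw [hBr, hxy] at h2
      exact (hq0e k).1 h2
    have hyo : addOrderOf y = e := by
      have h1 : addOrderOf y ∣ e :=
        addOrderOf_dvd_of_nsmul_eq_zero (AddMonoid.exponent_nsmul_eq_zero y)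
      have h2 : (e:ℤ) ∣ (addOrderOf y : ℤ) := by
        apply hyk
        rw [natCast_zsmul]
        exact addOrderOf_nsmul_eq_zero y
      exact Nat.dvd_antisymm h1 (by exact_mod_cast h2)
    -- U and W
    set U : AddSubgroup G := AddSubgroup.zmultiples x ⊔ AddSubgroup.zmultiples y with hU
    set W : AddSubgroup G := (Bh x).ker ⊓ (Bh y).ker with hWdef
    have hWmem : ∀ g : G, g ∈ W ↔ B x g = 0 ∧ B y g = 0 := by
      intro g
      rw [hWdef, AddSubgroup.mem_inf, AddMonoidHom.mem_ker, AddMonoidHom.mem_ker, hB, hB]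
    have hxydisj : AddSubgroup.zmultiples x ⊓ AddSubgroup.zmultiples y = ⊥ := by
      rw [eq_bot_iff]
      intro g hg
      obtain ⟨hg1, hg2⟩ := AddSubgroup.mem_inf.1 hg
      obtain ⟨k1, rfl⟩ := AddSubgroup.mem_zmultiples_iff.1 hg1
      obtain ⟨k2, hk2⟩ := AddSubgroup.mem_zmultiples_iff.1 hg2
      have h1 : B x (k1 • x) = 0 := by rw [hBr, halt, smul_zero]
      rw [← hk2, hBr, hxy] at h1
      obtain ⟨m, rfl⟩ := (hq0e k2).1 h1
      rw [AddSubgroup.mem_bot, ← hk2, mul_comm, mul_zsmul, hee, smul_zero]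
    have hUW : U ⊓ W = ⊥ := by
      rw [eq_bot_iff]
      intro g hg
      obtain ⟨hgU, hgW⟩ := AddSubgroup.mem_inf.1 hg
      rw [hU, AddSubgroup.mem_sup] at hgU
      obtain ⟨u, hu, v, hv, rfl⟩ := hgU
      obtain ⟨k1, rfl⟩ := AddSubgroup.mem_zmultiples_iff.1 hu
      obtain ⟨k2, rfl⟩ := AddSubgroup.mem_zmultiples_iff.1 hv
      rw [hWmem] at hgW
      obtain ⟨h1, h2⟩ := hgW
      rw [hr, hBr, hBr, halt, hxy, smul_zero, zero_add] at h1
      rw [hr, hBr, hBr, halt, hyx, smul_zero, add_zero, smul_neg, neg_eq_zero] at h2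
      have hv0 : k2 • y = 0 := by
        obtain ⟨m, rfl⟩ := (hq0e k2).1 h1
        rw [mul_comm, mul_zsmul, hee, smul_zero]
      have hu0 : k1 • x = 0 := by
        obtain ⟨m, rfl⟩ := (hq0e k1).1 h2
        rw [mul_comm, mul_zsmul, hee, smul_zero]
      rw [AddSubgroup.mem_bot, hu0, hv0, add_zero]
    have hUWtop : U ⊔ W = ⊤ := by
      rw [AddSubgroup.eq_top_iff']
      intro g
      obtain ⟨d, hd⟩ := hrep x g
      obtain ⟨c, hc⟩ := hrep y g
      refine AddSubgroup.mem_sup.2 ⟨(-c) • x + d • y, ?_, g - ((-c) • x + d • y), ?_, by abel⟩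
      · exact AddSubgroup.mem_sup.2 ⟨_, AddSubgroup.mem_zmultiples_iff.2 ⟨-c, rfl⟩,
          _, AddSubgroup.mem_zmultiples_iff.2 ⟨d, rfl⟩, rfl⟩
      · rw [hWmem]
        constructor
        · rw [hsubr, hd, hr, hBr, hBr, halt, hxy, smul_zero, zero_add, sub_self]
        · rw [hsubr, hc, hr, hBr, hBr, halt, hyx, smul_zero, add_zero, smul_neg,
            neg_smul, neg_neg, sub_self]
    have hcardU : Nat.card U = e * e := by
      rw [hU, card_sup_of_disjoint' hxydisj, Nat.card_zmultiples, Nat.card_zmultiples, hx, hyo]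
    have hcardG : Nat.card G = Nat.card U * Nat.card W := by
      have h1 := card_sup_of_disjoint' hUW
      rw [hUWtop] at h1
      rw [← h1]
      exact (Nat.card_congr AddSubgroup.topEquiv.toEquiv).symm
    clear hy heK hae haa hdiv hxea hadvd1 hBh he hq0 hφ hK0 hWdef
    clear_value Bh e q0 φ K0 U W
    -- the restricted pairing on W
    set B' : ↥W → ↥W → Q := fun w w' => B (w : G) (w' : G) with hB'
    have hW4 : ∀ w : ↥W, (∀ w' : ↥W, B' w w' = 0) → w = 0 := by
      intro w hw
      have hwW := (hWmem (w : G)).1 w.2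
      have hwg : ∀ g : G, B (w : G) g = 0 := by
        intro g
        have hg : g ∈ U ⊔ W := hUWtop ▸ AddSubgroup.mem_top g
        obtain ⟨u, hu, v, hv, rfl⟩ := AddSubgroup.mem_sup.1 hg
        have h1 : B (w : G) u = 0 := by
          rw [hU] at hu
          obtain ⟨u1, hu1, u2, hu2, rfl⟩ := AddSubgroup.mem_sup.1 hu
          obtain ⟨k1, rfl⟩ := AddSubgroup.mem_zmultiples_iff.1 hu1
          obtain ⟨k2, rfl⟩ := AddSubgroup.mem_zmultiples_iff.1 hu2
          rw [hr, hBr, hBr, hskew x, hskew y, hwW.1, hwW.2, neg_zero, smul_zero,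
            smul_zero, add_zero]
        have h2 : B (w : G) v = 0 := hw ⟨v, hv⟩
        rw [hr, h1, h2, add_zero]
      exact Subtype.ext (hnd _ hwg)
    have hcardWpos : 0 < Nat.card ↥W := Nat.card_pos
    have hWle : Nat.card ↥W ≤ n := by
      have h2 : 2 ≤ e := by omega
      have h3 : Nat.card ↥W < Nat.card G := by
        rw [hcardG, hcardU]
        have h4 : 1 * Nat.card ↥W < (e * e) * Nat.card ↥W := by
          apply (Nat.mul_lt_mul_right hcardWpos).2
          nlinarith
        simpa using h4
      omega
    obtain ⟨K, hKiso, hKcard⟩ := ih ↥W B'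
      (fun a b c => hl a b c) (fun a b c => hr a b c) (fun a => halt a)
      hW4 hWle
    -- assemble H
    have hmapW : AddSubgroup.map W.subtype K ≤ W := by
      rintro g ⟨w, _, rfl⟩
      exact w.2
    have hdisj2 : AddSubgroup.zmultiples x ⊓ AddSubgroup.map W.subtype K = ⊥ := by
      rw [eq_bot_iff]
      intro g hg
      obtain ⟨hg1, hg2⟩ := AddSubgroup.mem_inf.1 hg
      obtain ⟨k, rfl⟩ := AddSubgroup.mem_zmultiples_iff.1 hg1
      have hgW := (hWmem _).1 (hmapW hg2)
      have h2 := hgW.2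
      rw [hBr, hyx, smul_neg, neg_eq_zero] at h2
      obtain ⟨m, rfl⟩ := (hq0e k).1 h2
      rw [AddSubgroup.mem_bot, mul_comm, mul_zsmul, hee, smul_zero]
    refine ⟨AddSubgroup.zmultiples x ⊔ AddSubgroup.map W.subtype K, ?_, ?_⟩
    · intro g hg g' hg'
      obtain ⟨u, hu, v, hv, rfl⟩ := AddSubgroup.mem_sup.1 hg
      obtain ⟨u', hu', v', hv', rfl⟩ := AddSubgroup.mem_sup.1 hg'
      obtain ⟨k, rfl⟩ := AddSubgroup.mem_zmultiples_iff.1 hu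
      obtain ⟨k', rfl⟩ := AddSubgroup.mem_zmultiples_iff.1 hu'
      obtain ⟨w, hwK, rfl⟩ := hv
      obtain ⟨w', hwK', rfl⟩ := hv'
      have hwW := (hWmem _).1 w.2
      have hwW' := (hWmem _).1 w'.2
      have t1 : B (k • x) (k' • x) = 0 := by rw [hBl, hBr, halt, smul_zero, smul_zero]
      have t2 : B (k • x) ((w' : G)) = 0 := by rw [hBl, hwW'.1, smul_zero]
      have t3 : B ((w : G)) (k' • x) = 0 := by
        rw [hBr, hskew x, hwW.1, neg_zero, smul_zero]
      have t4 : B ((w : G)) ((w' : G)) = 0 := hKiso w hwK w' hwK'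
      show B (k • x + (w : G)) (k' • x + (w' : G)) = 0
      rw [hl, hr, hr, t1, t2, t3, t4]; simp
    · have hKm : Nat.card ↥(AddSubgroup.map W.subtype K) = Nat.card ↥K :=
        Nat.card_congr (AddSubgroup.equivMapOfInjective K W.subtype
          (AddSubgroup.subtype_injective W)).toEquiv.symm
      rw [card_sup_of_disjoint' hdisj2, Nat.card_zmultiples, hx, hKm, hcardG, hcardU,
        ← hKcard]
      ring

theorem exists_isotropic_subgroup_card_sq
    (G : Type*) [AddCommGroup G] [Fintype G]
    (B : G → G → ℚ ⧸ AddSubgroup.zmultiples (1 : ℚ))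
    (hadd_left : ∀ x y z : G, B (x + y) z = B x z + B y z)
    (hadd_right : ∀ x y z : G, B x (y + z) = B x y + B x z)
    (halt : ∀ x : G, B x x = 0)
    (hnondeg : ∀ x : G, (∀ y : G, B x y = 0) → x = 0) :
    ∃ H : AddSubgroup G, (∀ x ∈ H, ∀ y ∈ H, B x y = 0) ∧
      Nat.card H ^ 2 = Fintype.card G := by
  have h := aux_lagrangian (Nat.card G) G B hadd_left hadd_right halt hnondeg le_rfl
  rwa [Nat.card_eq_fintype_card] at h
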